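/- Let H be a Hilbert space, S a bounded positive self-adjoint operator with spectrum in [A,B], 0 < A, and let g ∈ H be nonzero. Set γ = φ(S)g with φ continuous and positive on [A,B], and let R = (min_{s∈σ(S)} sφ(s)) / (max_{s∈σ(S)} sφ(s)). Then ‖γ/‖γ‖ − S^{-1}g/‖S^{-1}g‖‖ ≤ (1 − R^{1/2})·√(2/(1+R)). -/

import Mathlib

set_option maxHeartbeats 1000000

open RCLike ContinuousLinearMap
open scoped InnerProductSpace

/-- Kantorovich-type error bound for approximating the canonical dual window
`g^d = S^{-1} g` by `γ = φ(S) g`. -/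
theorem stmt1 {H : Type*} [NormedAddCommGroup H] [InnerProductSpace ℂ H] [CompleteSpace H]
    (S : H →L[ℂ] H) (hS : IsSelfAdjoint S) (A B : ℝ) (hA : 0 < A) (hAB : A ≤ B)
    (hspec : spectrum ℝ S ⊆ Set.Icc A B)
    (g : H) (hg : g ≠ 0)
    (φ : ℝ → ℝ) (hφc : ContinuousOn φ (Set.Icc A B))
    (hφpos : ∀ s ∈ Set.Icc A B, 0 < φ s)
    (R F : ℝ) (hR : R ∈ Set.Ioc (0:ℝ) 1) (hF : 0 < F)
    (hRspec : ∀ s ∈ spectrum ℝ S, R * F ≤ s * φ s ∧ s * φ s ≤ F) :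
    ‖‖(cfc φ S) g‖⁻¹ • (cfc φ S) g -
      ‖(cfc (fun s : ℝ => s⁻¹) S) g‖⁻¹ • (cfc (fun s : ℝ => s⁻¹) S) g‖ ≤
      (1 - R ^ ((1:ℝ)/2)) * Real.sqrt (2 / (1 + R)) := by
  obtain ⟨hR0, hR1⟩ := hR
  have hφc' : ContinuousOn φ (spectrum ℝ S) := hφc.mono hspec
  have hs0 : ∀ s ∈ spectrum ℝ S, s ≠ 0 := fun s hs => (hA.trans_le (hspec hs).1).ne'
  have hinvc : ContinuousOn (fun s : ℝ => s⁻¹) (spectrum ℝ S) :=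
    ContinuousOn.inv₀ continuousOn_id hs0
  -- nonvanishing of the two vectors
  have hunit : ∀ (f : ℝ → ℝ), ContinuousOn f (spectrum ℝ S) →
      (∀ s ∈ spectrum ℝ S, f s ≠ 0) → (cfc f S) g ≠ 0 := by
    intro f hfc hf0 h0
    have hu : IsUnit (cfc f S) := isUnit_cfc f S hfc hS hf0
    apply hg
    rw [← hu.unit_spec] at h0
    have h1 : (↑hu.unit⁻¹ : H →L[ℂ] H) ((↑hu.unit : H →L[ℂ] H) g) = g := by
      rw [← ContinuousLinearMap.mul_apply, Units.inv_mul, ContinuousLinearMap.one_apply]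
    rw [← h1, h0, map_zero]
  have hTg : (cfc φ S) g ≠ 0 :=
    hunit φ hφc' (fun s hs => (hφpos s (hspec hs)).ne')
  have hVg : (cfc (fun s : ℝ => s⁻¹) S) g ≠ 0 :=
    hunit _ hinvc (fun s hs => inv_ne_zero (hs0 s hs))
  -- inner products via cfc
  have key : ∀ (f1 f2 : ℝ → ℝ), ContinuousOn f1 (spectrum ℝ S) →
      ContinuousOn f2 (spectrum ℝ S) →
      re ⟪(cfc f1 S) g, (cfc f2 S) g⟫_ℂ = re ⟪(cfc (fun s => f1 s * f2 s) S) g, g⟫_ℂ := by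
    intro f1 f2 h1 h2
    have hsa : IsSelfAdjoint (cfc f1 S) := cfc_predicate f1 S
    rw [cfc_mul f1 f2 S h1 h2, ContinuousLinearMap.mul_apply]
    conv_rhs => rw [← hsa.adjoint_eq, ContinuousLinearMap.adjoint_inner_left]
    exact inner_re_symm _ _
  set np := ‖(cfc φ S) g‖ with hnp_def
  set nq := ‖(cfc (fun s : ℝ => s⁻¹) S) g‖ with hnq_def
  set a := re ⟪(cfc φ S) g, (cfc (fun s : ℝ => s⁻¹) S) g⟫_ℂ with ha_def
  have hnp : 0 < np := norm_pos_iff.mpr hTg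
  have hnq : 0 < nq := norm_pos_iff.mpr hVg
  -- the three spectral integrals
  have hp : re ⟪(cfc (fun s => φ s * φ s) S) g, g⟫_ℂ = np ^ 2 := by
    rw [← key φ φ hφc' hφc', inner_self_eq_norm_sq]
  have hq : re ⟪(cfc (fun s : ℝ => s⁻¹ * s⁻¹) S) g, g⟫_ℂ = nq ^ 2 := by
    rw [← key _ _ hinvc hinvc, inner_self_eq_norm_sq]
  have ha : re ⟪(cfc (fun s => φ s * s⁻¹) S) g, g⟫_ℂ = a := by
    rw [← key φ _ hφc' hinvc]
  -- pointwise Kantorovich inequality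
  have key_ineq : ∀ s ∈ spectrum ℝ S,
      φ s * φ s + (R * F * F) * (s⁻¹ * s⁻¹) ≤ (R * F + F) * (φ s * s⁻¹) := by
    intro s hs
    have hs1 : 0 < s := hA.trans_le (hspec hs).1
    obtain ⟨h1, h2⟩ := hRspec s hs
    have hk : 0 ≤ (F - s * φ s) * (s * φ s - R * F) :=
      mul_nonneg (by linarith) (by linarith)
    have heq : (R * F + F) * (φ s * s⁻¹) - (φ s * φ s + (R * F * F) * (s⁻¹ * s⁻¹))
        = (F - s * φ s) * (s * φ s - R * F) * (s⁻¹ * s⁻¹) := by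
      field_simp
      ring
    nlinarith [mul_nonneg hk (mul_nonneg (inv_nonneg.mpr hs1.le) (inv_nonneg.mpr hs1.le))]
  -- operator inequality and its inner-product consequence
  have hlc : ContinuousOn (fun s : ℝ => φ s * φ s + (R * F * F) * (s⁻¹ * s⁻¹))
      (spectrum ℝ S) := (hφc'.mul hφc').add (continuousOn_const.mul (hinvc.mul hinvc))
  have hhc : ContinuousOn (fun s : ℝ => (R * F + F) * (φ s * s⁻¹)) (spectrum ℝ S) :=
    continuousOn_const.mul (hφc'.mul hinvc)
  have hop : cfc (fun s : ℝ => φ s * φ s + (R * F * F) * (s⁻¹ * s⁻¹)) S ≤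
      cfc (fun s : ℝ => (R * F + F) * (φ s * s⁻¹)) S := cfc_mono key_ineq hlc hhc
  have hip := ((ContinuousLinearMap.nonneg_iff_isPositive _).mp
    (sub_nonneg.mpr hop)).inner_nonneg_left g
  rw [ContinuousLinearMap.sub_apply, inner_sub_left] at hip
  replace hip := (RCLike.nonneg_iff.mp hip).1
  rw [map_sub] at hip
  -- split the low side and pull out constants
  have hsplit : re ⟪(cfc (fun s : ℝ => φ s * φ s + (R * F * F) * (s⁻¹ * s⁻¹)) S) g, g⟫_ℂ
      = np ^ 2 + (R * F * F) * nq ^ 2 := by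
    rw [cfc_add S (fun s : ℝ => φ s * φ s) (fun s : ℝ => (R * F * F) * (s⁻¹ * s⁻¹)) (hφc'.mul hφc') (continuousOn_const.mul (hinvc.mul hinvc)),
      ContinuousLinearMap.add_apply, inner_add_left, map_add, hp,
      cfc_const_mul (R * F * F) (fun s : ℝ => s⁻¹ * s⁻¹) S (hinvc.mul hinvc),
      ContinuousLinearMap.smul_apply, real_smul_eq_coe_smul (K := ℂ),
      inner_smul_real_left, smul_re, hq]
  have hhigh : re ⟪(cfc (fun s : ℝ => (R * F + F) * (φ s * s⁻¹)) S) g, g⟫_ℂ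
      = (R * F + F) * a := by
    rw [cfc_const_mul (R * F + F) (fun s : ℝ => φ s * s⁻¹) S (hφc'.mul hinvc),
      ContinuousLinearMap.smul_apply, real_smul_eq_coe_smul (K := ℂ),
      inner_smul_real_left, smul_re, ha]
  rw [hsplit, hhigh] at hip
  -- numeric endgame
  set r := Real.sqrt R with hr_def
  have hr2 : r ^ 2 = R := Real.sq_sqrt hR0.le
  have hr0 : 0 < r := Real.sqrt_pos.mpr hR0
  have hr1 : r ≤ 1 := by
    rw [hr_def, show (1:ℝ) = Real.sqrt 1 from (Real.sqrt_one).symm]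
    exact Real.sqrt_le_sqrt hR1
  have h1R : 0 < 1 + R := by linarith
  -- AM-GM and cancellation of F
  have h5 : r ^ 2 * F ^ 2 * nq ^ 2 = R * F * F * nq ^ 2 := by rw [hr2]; ring
  have hamg : 2 * r * F * (np * nq) ≤ np ^ 2 + (R * F * F) * nq ^ 2 := by
    nlinarith [sq_nonneg (np - r * F * nq), h5]
  have hFa : F * (2 * r * (np * nq)) ≤ F * ((1 + R) * a) := by
    nlinarith [hamg, hip]
  have ha' : 2 * r * (np * nq) ≤ (1 + R) * a :=
    le_of_mul_le_mul_left hFa hF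
  -- the inner product of the normalized vectors
  have hre : re ⟪np⁻¹ • (cfc φ S) g, nq⁻¹ • (cfc (fun s : ℝ => s⁻¹) S) g⟫_ℂ
      = np⁻¹ * (nq⁻¹ * a) := by
    rw [real_smul_eq_coe_smul (K := ℂ) np⁻¹, real_smul_eq_coe_smul (K := ℂ) nq⁻¹,
      inner_smul_real_left, inner_smul_real_right, smul_re, smul_re]
  have hnu : ‖np⁻¹ • (cfc φ S) g‖ = 1 := by
    rw [norm_smul, Real.norm_eq_abs, abs_inv, abs_of_pos hnp, ← hnp_def,
      inv_mul_cancel₀ hnp.ne']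
  have hnv : ‖nq⁻¹ • (cfc (fun s : ℝ => s⁻¹) S) g‖ = 1 := by
    rw [norm_smul, Real.norm_eq_abs, abs_inv, abs_of_pos hnq, ← hnq_def,
      inv_mul_cancel₀ hnq.ne']
  have hnsq : ‖np⁻¹ • (cfc φ S) g - nq⁻¹ • (cfc (fun s : ℝ => s⁻¹) S) g‖ ^ 2
      = 2 - 2 * (np⁻¹ * (nq⁻¹ * a)) := by
    rw [@norm_sub_sq ℂ, hre, hnu, hnv]; ring
  -- bound on the inner product of normalized vectors
  have hfrac : 2 * r ≤ (1 + R) * (np⁻¹ * (nq⁻¹ * a)) := by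
    have hkey : np⁻¹ * (nq⁻¹ * ((1 + R) * a)) = (1 + R) * (np⁻¹ * (nq⁻¹ * a)) := by ring
    have h2 : np⁻¹ * (nq⁻¹ * (2 * r * (np * nq))) = 2 * r := by
      field_simp
    calc 2 * r = np⁻¹ * (nq⁻¹ * (2 * r * (np * nq))) := h2.symm
      _ ≤ np⁻¹ * (nq⁻¹ * ((1 + R) * a)) := by
          apply mul_le_mul_of_nonneg_left _ (inv_nonneg.mpr hnp.le)
          exact mul_le_mul_of_nonneg_left ha' (inv_nonneg.mpr hnq.le)
      _ = (1 + R) * (np⁻¹ * (nq⁻¹ * a)) := hkey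
  -- squared bound
  have hrpow : R ^ ((1:ℝ)/2) = r := (Real.sqrt_eq_rpow R).symm
  rw [hrpow]
  have hrhs0 : 0 ≤ (1 - r) * Real.sqrt (2 / (1 + R)) :=
    mul_nonneg (by linarith) (Real.sqrt_nonneg _)
  have hrhs2 : ((1 - r) * Real.sqrt (2 / (1 + R))) ^ 2 = (1 - r) ^ 2 * (2 / (1 + R)) := by
    rw [mul_pow, Real.sq_sqrt (by positivity)]
  have hsq : ‖np⁻¹ • (cfc φ S) g - nq⁻¹ • (cfc (fun s : ℝ => s⁻¹) S) g‖ ^ 2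
      ≤ ((1 - r) * Real.sqrt (2 / (1 + R))) ^ 2 := by
    rw [hrhs2, hnsq, show (1 - r) ^ 2 * (2 / (1 + R)) = ((1 - r) ^ 2 * 2) / (1 + R) by ring,
      le_div_iff₀ h1R]
    nlinarith [hfrac, hr2]
  calc ‖np⁻¹ • (cfc φ S) g - nq⁻¹ • (cfc (fun s : ℝ => s⁻¹) S) g‖
      = Real.sqrt (‖np⁻¹ • (cfc φ S) g - nq⁻¹ • (cfc (fun s : ℝ => s⁻¹) S) g‖ ^ 2) :=
        (Real.sqrt_sq (norm_nonneg _)).symm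
    _ ≤ Real.sqrt (((1 - r) * Real.sqrt (2 / (1 + R))) ^ 2) := Real.sqrt_le_sqrt hsq
    _ = (1 - r) * Real.sqrt (2 / (1 + R)) := Real.sqrt_sq hrhs0
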